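/- Let W̃ be the subgroup of GL(4,ℂ) generated by W, ν and τ. Every polynomial f ∈ ℂ[z_0,z_1,z_2,z_3] that is invariant under W̃ (i.e. f(gz) = f(z) for all g ∈ W̃) belongs to the subalgebra of ℂ[z_0,z_1,z_2,z_3] generated by F_1, F_3, F_4 and F_6. -/

import Mathlib

open MvPolynomial

/-- The symmetric invariants `F_k = (1/6) Σ_{i<j} [(z_i - z_j)^{2k} + (z_i + z_j)^{2k}]`. -/
noncomputable def Fpoly (k : ℕ) : MvPolynomial (Fin 4) ℂ :=
  C (6⁻¹ : ℂ) *
    ∑ i : Fin 4, ∑ j : Fin 4,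
      if i < j then (X i - X j) ^ (2 * k) + (X i + X j) ^ (2 * k) else 0

/-- The group `W` of even-signed permutations of coordinates, as a set of matrices:
matrices of the maps `e_i ↦ ε_i e_{s(i)}` with `s ∈ S₄`, `ε_i = ±1`, `ε₀ε₁ε₂ε₃ = 1`. -/
def SignedPerm : Set (Matrix (Fin 4) (Fin 4) ℂ) :=
  { M | ∃ (s : Equiv.Perm (Fin 4)) (ε : Fin 4 → ℂ),
      (∀ i, ε i = 1 ∨ ε i = -1) ∧ ε 0 * ε 1 * ε 2 * ε 3 = 1 ∧
      ∀ i j, M i j = if i = s j then ε j else 0 }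

/-- The matrix `ν = diag(1,1,1,-1)`. -/
noncomputable def nuMat : Matrix (Fin 4) (Fin 4) ℂ :=
  Matrix.diagonal ![1, 1, 1, -1]

/-- The matrix `τ`. -/
noncomputable def tauMat : Matrix (Fin 4) (Fin 4) ℂ :=
  (2⁻¹ : ℂ) • Matrix.of
    ![![1, 1, 1, 1], ![1, 1, -1, -1], ![1, -1, -1, 1], ![1, -1, 1, -1]]

/-- A polynomial `f` is invariant under the linear map with matrix `M` if `f ∘ M = f`,
equivalently (over the infinite field `ℂ`) `f (M z) = f z` for all `z`. -/
def InvUnder (M : Matrix (Fin 4) (Fin 4) ℂ) (f : MvPolynomial (Fin 4) ℂ) : Prop :=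
  ∀ z : Fin 4 → ℂ, eval (M.mulVec z) f = eval z f

/-- The group `W̃`: the subgroup of `GL(4, ℂ)` generated by `W`, `ν` and `τ`. -/
noncomputable def tildeW : Subgroup (GL (Fin 4) ℂ) :=
  Subgroup.closure
    { g : GL (Fin 4) ℂ | (↑g : Matrix (Fin 4) (Fin 4) ℂ) ∈ SignedPerm ∨
        (↑g : Matrix (Fin 4) (Fin 4) ℂ) = nuMat ∨ (↑g : Matrix (Fin 4) (Fin 4) ℂ) = tauMat }

namespace F4InvProof

noncomputable section

abbrev TT : Type := MvPolynomial (Fin 4) ℂ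

/-- Substitution of the linear forms given by the rows of `M`. -/
def substM (M : Matrix (Fin 4) (Fin 4) ℂ) : TT →ₐ[ℂ] TT :=
  aeval fun i => ∑ j, C (M i j) * X j

lemma eval_substM (M : Matrix (Fin 4) (Fin 4) ℂ) (f : TT) (z : Fin 4 → ℂ) :
    eval z (substM M f) = eval (M.mulVec z) f := by
  rw [substM, aeval_def, eval_eval₂]
  have h1 : ((eval z).comp (algebraMap ℂ TT)) = RingHom.id ℂ := by
    ext r; simp [algebraMap_eq]
  rw [h1, eval₂_id]
  have h2 : (fun i => eval z (∑ j, C (M i j) * X j)) = M.mulVec z := by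
    funext i
    simp [Matrix.mulVec, dotProduct]
  rw [h2]

lemma substM_eq_of_inv {M : Matrix (Fin 4) (Fin 4) ℂ} {f : TT} (h : InvUnder M f) :
    substM M f = f :=
  MvPolynomial.funext fun z => by rw [eval_substM]; exact h z

lemma substM_mul (M N : Matrix (Fin 4) (Fin 4) ℂ) (f : TT) :
    substM (M * N) f = substM N (substM M f) :=
  MvPolynomial.funext fun z => by
    rw [eval_substM, eval_substM, eval_substM, Matrix.mulVec_mulVec]

lemma substM_one (f : TT) : substM 1 f = f :=
  MvPolynomial.funext fun z => by rw [eval_substM, Matrix.one_mulVec]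

/-- The set of matrices realized by elements of `tildeW`. -/
def TW : Set (Matrix (Fin 4) (Fin 4) ℂ) :=
  { M | ∃ u : GL (Fin 4) ℂ, u ∈ tildeW ∧ (↑u : Matrix (Fin 4) (Fin 4) ℂ) = M }

lemma TW.one : (1 : Matrix (Fin 4) (Fin 4) ℂ) ∈ TW :=
  ⟨1, one_mem _, rfl⟩

lemma TW.mul {M N : Matrix (Fin 4) (Fin 4) ℂ} (hM : M ∈ TW) (hN : N ∈ TW) : M * N ∈ TW := by
  obtain ⟨u, hu, rfl⟩ := hM
  obtain ⟨v, hv, rfl⟩ := hN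
  exact ⟨u * v, mul_mem hu hv, rfl⟩

lemma TW.gen {M N : Matrix (Fin 4) (Fin 4) ℂ} (h1 : M * N = 1) (h2 : N * M = 1)
    (h : M ∈ SignedPerm ∨ M = nuMat ∨ M = tauMat) : M ∈ TW :=
  ⟨⟨M, N, h1, h2⟩, Subgroup.subset_closure h, rfl⟩

/-- Permutation matrices. -/
def permM (s : Equiv.Perm (Fin 4)) : Matrix (Fin 4) (Fin 4) ℂ :=
  Matrix.of fun i j => if i = s j then 1 else 0

lemma permM_mul (s t : Equiv.Perm (Fin 4)) : permM s * permM t = permM (s * t) := by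
  ext i j
  rw [Matrix.mul_apply]
  rw [Finset.sum_eq_single (t j)]
  · simp [permM, Equiv.Perm.mul_apply]; congr
  · intro k _ hk
    simp only [permM, Matrix.of_apply]
    rw [if_neg hk]
    simp
  · simp

lemma permM_one : permM 1 = 1 := by
  ext i j
  rw [show permM 1 i j = if i = j then (1 : ℂ) else 0 from rfl, Matrix.one_apply]

lemma permM_mem (s : Equiv.Perm (Fin 4)) : permM s ∈ TW := by
  refine TW.gen (N := permM s⁻¹) ?_ ?_ ?_
  · rw [permM_mul, mul_inv_cancel, permM_one]
  · rw [permM_mul, inv_mul_cancel, permM_one]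
  · exact Or.inl ⟨s, fun _ => 1, fun i => Or.inl rfl, by norm_num, fun i j => rfl⟩

lemma permM_mulVec (s : Equiv.Perm (Fin 4)) (z : Fin 4 → ℂ) :
    (permM s).mulVec z = fun i => z (s⁻¹ i) := by
  funext i
  simp only [Matrix.mulVec, dotProduct, permM, Matrix.of_apply]
  rw [Finset.sum_eq_single (s⁻¹ i)]
  · simp
  · intro k _ hk
    rw [if_neg (fun h => hk (by simp [h])), zero_mul]
  · simp

/-- ±1 diagonal matrices are realized. -/
lemma diag_mem (d : Fin 4 → ℂ) (hd : ∀ i, d i = 1 ∨ d i = -1) :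
    Matrix.diagonal d ∈ TW := by
  have hsq : ∀ (e : Fin 4 → ℂ), (∀ i, e i = 1 ∨ e i = -1) →
      Matrix.diagonal e * Matrix.diagonal e = 1 := by
    intro e he
    rw [Matrix.diagonal_mul_diagonal]
    have h : (fun i => e i * e i) = fun _ => (1 : ℂ) := by
      funext i
      rcases he i with h | h <;> rw [h] <;> norm_num
    rw [h]
    exact Matrix.diagonal_one
  have hgen : ∀ (e : Fin 4 → ℂ), (∀ i, e i = 1 ∨ e i = -1) →
      e 0 * e 1 * e 2 * e 3 = 1 → Matrix.diagonal e ∈ TW := by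
    intro e he hprod
    refine TW.gen (hsq e he) (hsq e he) (Or.inl ⟨1, e, he, hprod, ?_⟩)
    intro i j
    rw [Matrix.diagonal_apply]
    simp only [Equiv.Perm.one_apply]
    split_ifs with h
    · simp [h]
    · simp [h]
  have hnd : ∀ i : Fin 4, (![1, 1, 1, -1] : Fin 4 → ℂ) i = 1 ∨ (![1, 1, 1, -1] : Fin 4 → ℂ) i = -1 := by
    intro i
    fin_cases i
    · exact Or.inl rfl
    · exact Or.inl rfl
    · exact Or.inl rfl
    · exact Or.inr rfl
  have hnu : nuMat ∈ TW := by
    refine TW.gen (M := nuMat) (N := nuMat) (hsq _ hnd) (hsq _ hnd) (Or.inr (Or.inl rfl))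
  have hd4 : d 0 * d 1 * d 2 * d 3 = 1 ∨ d 0 * d 1 * d 2 * d 3 = -1 := by
    rcases hd 0 with h0 | h0 <;> rcases hd 1 with h1 | h1 <;> rcases hd 2 with h2 | h2 <;>
      rcases hd 3 with h3 | h3 <;> rw [h0, h1, h2, h3] <;> norm_num
  rcases hd4 with hp | hp
  · exact hgen d hd hp
  · have he : ∀ i, (fun j => d j * (![1, 1, 1, -1] : Fin 4 → ℂ) j) i = 1 ∨
        (fun j => d j * (![1, 1, 1, -1] : Fin 4 → ℂ) j) i = -1 := by
      intro i
      rcases hd i with h | h <;> rcases hnd i with h' | h' <;> simp only [h, h'] <;> norm_num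
    have heprod : (fun j => d j * (![1, 1, 1, -1] : Fin 4 → ℂ) j) 0 *
        (fun j => d j * (![1, 1, 1, -1] : Fin 4 → ℂ) j) 1 *
        (fun j => d j * (![1, 1, 1, -1] : Fin 4 → ℂ) j) 2 *
        (fun j => d j * (![1, 1, 1, -1] : Fin 4 → ℂ) j) 3 = 1 := by
      have e0 : (![1, 1, 1, -1] : Fin 4 → ℂ) 0 = 1 := rfl
      have e1 : (![1, 1, 1, -1] : Fin 4 → ℂ) 1 = 1 := rfl
      have e2 : (![1, 1, 1, -1] : Fin 4 → ℂ) 2 = 1 := rfl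
      have e3 : (![1, 1, 1, -1] : Fin 4 → ℂ) 3 = -1 := rfl
      simp only [e0, e1, e2, e3]
      calc d 0 * 1 * (d 1 * 1) * (d 2 * 1) * (d 3 * -1)
          = -(d 0 * d 1 * d 2 * d 3) := by ring
        _ = 1 := by rw [hp]; norm_num
    have hmem := TW.mul (hgen _ he heprod) hnu
    have heq : Matrix.diagonal (fun j => d j * (![1, 1, 1, -1] : Fin 4 → ℂ) j) * nuMat
        = Matrix.diagonal d := by
      rw [nuMat, Matrix.diagonal_mul_diagonal]
      have h : (fun i => (fun j => d j * (![1, 1, 1, -1] : Fin 4 → ℂ) j) i *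
          (![1, 1, 1, -1] : Fin 4 → ℂ) i) = d := by
        funext i
        rcases hnd i with h' | h' <;> simp only [h'] <;> ring
      rw [h]
    rwa [heq] at hmem


/-! ### The basic polynomials and identities -/

/-- Power sums of squares. -/
def Pp (k : ℕ) : TT := ∑ i, X i ^ (2 * k)

/-- `6 • Fpoly k`, with integer coefficients. -/
def Spoly (k : ℕ) : TT :=
  ∑ i : Fin 4, ∑ j : Fin 4,
    if i < j then (X i - X j) ^ (2 * k) + (X i + X j) ^ (2 * k) else 0

lemma Fpoly_eq_Spoly (k : ℕ) : Fpoly k = C (6⁻¹ : ℂ) * Spoly k := rfl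

def zA0 : TT := 4 * Pp 2 - 2 * (Pp 1) ^ 2
def zA1 : TT := -(2 * Pp 2) + (Pp 1) ^ 2 + 24 * (X 0 * X 1 * X 2 * X 3)
def zA2 : TT := -(2 * Pp 2) + (Pp 1) ^ 2 - 24 * (X 0 * X 1 * X 2 * X 3)

/-- The five distinguished invariants: `a₀, a₁, a₂, p₁, S₃`. -/
def gfun : Fin 5 → TT := ![zA0, zA1, zA2, Pp 1, Spoly 3]

set_option maxHeartbeats 1000000 in
lemma hS1 : Spoly 1 = 6 * Pp 1 := by
  simp (config := { decide := true }) only [Spoly, Pp, Fin.sum_univ_four, if_true, if_false]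
  ring

set_option maxHeartbeats 1000000 in
lemma hS3 : Spoly 3 = 30 * Pp 1 * Pp 2 - 24 * Pp 3 := by
  simp (config := { decide := true }) only [Spoly, Pp, Fin.sum_univ_four, if_true, if_false]
  ring

set_option maxHeartbeats 4000000 in
lemma ids2 : 240 * (zA0 * zA1 + zA0 * zA2 + zA1 * zA2)
    = -(288 * Spoly 4) + 208 * Spoly 1 * Spoly 3 - 5 * (Spoly 1) ^ 4 := by
  simp (config := { decide := true }) only [Spoly, Pp, zA0, zA1, zA2, Fin.sum_univ_four,
    if_true, if_false]
  ring

set_option maxHeartbeats 4000000 in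
lemma ids3 : 38880 * (zA0 * zA1 * zA2)
    = -(41472 * Spoly 6) + 17568 * (Spoly 3) ^ 2 + 15696 * (Spoly 1) ^ 2 * Spoly 4
      - 6776 * (Spoly 1) ^ 3 * Spoly 3 + 109 * (Spoly 1) ^ 6 := by
  simp (config := { decide := true }) only [Spoly, Pp, zA0, zA1, zA2, Fin.sum_univ_four,
    if_true, if_false]
  ring

set_option maxHeartbeats 1000000 in
lemma ids1 : zA0 + zA1 + zA2 = 0 := by
  simp only [zA0, zA1, zA2]
  ring

/-! ### Substitution action of `τ` and `ν` on the distinguished invariants -/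

def tvec : Fin 4 → TT :=
  ![C (2⁻¹:ℂ) * (X 0 + X 1 + X 2 + X 3), C (2⁻¹:ℂ) * (X 0 + X 1 - X 2 - X 3),
    C (2⁻¹:ℂ) * (X 0 - X 1 - X 2 + X 3), C (2⁻¹:ℂ) * (X 0 - X 1 + X 2 - X 3)]

def nvec : Fin 4 → TT := ![X 0, X 1, X 2, -X 3]

lemma substM_tau : substM tauMat = aeval tvec := by
  unfold substM
  congr 1
  funext i
  fin_cases i <;> simp [tauMat, tvec, Fin.sum_univ_four] <;> ring

lemma substM_nu : substM nuMat = aeval nvec := by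
  unfold substM
  congr 1
  funext i
  fin_cases i <;> simp [nuMat, nvec, Fin.sum_univ_four, Matrix.diagonal] <;> try ring

lemma Chalf (n : ℕ) (m : ℂ) (hm : (2:ℂ)⁻¹ ^ n * m = 1) (y : TT) :
    C ((2:ℂ)⁻¹) ^ n * (C m * y) = y := by
  rw [← map_pow, ← mul_assoc, ← C_mul, hm, C_1, one_mul]

set_option maxHeartbeats 2000000 in
lemma tau_a0 : substM tauMat zA0 = zA1 := by
  have h : substM tauMat zA0 = C ((2:ℂ)⁻¹) ^ 4 * (C (16:ℂ) * zA1) := by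
    rw [substM_tau, show (C (16:ℂ) : TT) = 16 from map_ofNat C 16]
    simp only [zA0, zA1, Pp, Fin.sum_univ_four, map_sub, map_add, map_mul, map_pow,
      map_ofNat, aeval_X, tvec, Matrix.cons_val_zero, Matrix.cons_val_one, Matrix.head_cons,
      Matrix.cons_val_two, Matrix.tail_cons, Matrix.cons_val_three]
    ring
  rw [h, Chalf 4 16 (by norm_num)]

set_option maxHeartbeats 2000000 in
lemma tau_a1 : substM tauMat zA1 = zA0 := by
  have h : substM tauMat zA1 = C ((2:ℂ)⁻¹) ^ 4 * (C (16:ℂ) * zA0) := by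
    rw [substM_tau, show (C (16:ℂ) : TT) = 16 from map_ofNat C 16]
    simp only [zA0, zA1, Pp, Fin.sum_univ_four, map_sub, map_add, map_mul, map_pow, map_neg,
      map_ofNat, aeval_X, tvec, Matrix.cons_val_zero, Matrix.cons_val_one, Matrix.head_cons,
      Matrix.cons_val_two, Matrix.tail_cons, Matrix.cons_val_three]
    ring
  rw [h, Chalf 4 16 (by norm_num)]

set_option maxHeartbeats 2000000 in
lemma tau_a2 : substM tauMat zA2 = zA2 := by
  have h : substM tauMat zA2 = C ((2:ℂ)⁻¹) ^ 4 * (C (16:ℂ) * zA2) := by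
    rw [substM_tau, show (C (16:ℂ) : TT) = 16 from map_ofNat C 16]
    simp only [zA2, Pp, Fin.sum_univ_four, map_sub, map_add, map_mul, map_pow, map_neg,
      map_ofNat, aeval_X, tvec, Matrix.cons_val_zero, Matrix.cons_val_one, Matrix.head_cons,
      Matrix.cons_val_two, Matrix.tail_cons, Matrix.cons_val_three]
    ring
  rw [h, Chalf 4 16 (by norm_num)]

set_option maxHeartbeats 2000000 in
lemma tau_p1 : substM tauMat (Pp 1) = Pp 1 := by
  have h : substM tauMat (Pp 1) = C ((2:ℂ)⁻¹) ^ 2 * (C (4:ℂ) * Pp 1) := by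
    rw [substM_tau, show (C (4:ℂ) : TT) = 4 from map_ofNat C 4]
    simp only [Pp, Fin.sum_univ_four, map_add, map_mul, map_pow,
      map_ofNat, aeval_X, tvec, Matrix.cons_val_zero, Matrix.cons_val_one, Matrix.head_cons,
      Matrix.cons_val_two, Matrix.tail_cons, Matrix.cons_val_three]
    ring
  rw [h, Chalf 2 4 (by norm_num)]

set_option maxHeartbeats 4000000 in
lemma tau_S3 : substM tauMat (Spoly 3) = Spoly 3 := by
  have h : substM tauMat (Spoly 3) = C ((2:ℂ)⁻¹) ^ 6 * (C (64:ℂ) * Spoly 3) := by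
    rw [substM_tau, show (C (64:ℂ) : TT) = 64 from map_ofNat C 64]
    simp (config := { decide := true }) only [Spoly, Fin.sum_univ_four, if_true, if_false,
      map_sub, map_add, map_mul, map_pow, map_ofNat, aeval_X, tvec, Matrix.cons_val_zero,
      Matrix.cons_val_one, Matrix.head_cons, Matrix.cons_val_two, Matrix.tail_cons,
      Matrix.cons_val_three, map_zero]
    ring
  rw [h, Chalf 6 64 (by norm_num)]

set_option maxHeartbeats 2000000 in
lemma nu_a0 : substM nuMat zA0 = zA0 := by
  rw [substM_nu]
  simp only [zA0, Pp, Fin.sum_univ_four, map_sub, map_add, map_mul, map_pow, map_neg,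
    map_ofNat, aeval_X, nvec, Matrix.cons_val_zero, Matrix.cons_val_one, Matrix.head_cons,
    Matrix.cons_val_two, Matrix.tail_cons, Matrix.cons_val_three]
  ring

set_option maxHeartbeats 2000000 in
lemma nu_a1 : substM nuMat zA1 = zA2 := by
  rw [substM_nu]
  simp only [zA1, zA2, Pp, Fin.sum_univ_four, map_sub, map_add, map_mul, map_pow, map_neg,
    map_ofNat, aeval_X, nvec, Matrix.cons_val_zero, Matrix.cons_val_one, Matrix.head_cons,
    Matrix.cons_val_two, Matrix.tail_cons, Matrix.cons_val_three]
  ring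

set_option maxHeartbeats 2000000 in
lemma nu_a2 : substM nuMat zA2 = zA1 := by
  rw [substM_nu]
  simp only [zA1, zA2, Pp, Fin.sum_univ_four, map_sub, map_add, map_mul, map_pow, map_neg,
    map_ofNat, aeval_X, nvec, Matrix.cons_val_zero, Matrix.cons_val_one, Matrix.head_cons,
    Matrix.cons_val_two, Matrix.tail_cons, Matrix.cons_val_three]
  ring

set_option maxHeartbeats 2000000 in
lemma nu_p1 : substM nuMat (Pp 1) = Pp 1 := by
  rw [substM_nu]
  simp only [Pp, Fin.sum_univ_four, map_add, map_mul, map_pow, map_neg,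
    map_ofNat, aeval_X, nvec, Matrix.cons_val_zero, Matrix.cons_val_one, Matrix.head_cons,
    Matrix.cons_val_two, Matrix.tail_cons, Matrix.cons_val_three]
  ring

set_option maxHeartbeats 2000000 in
lemma nu_S3 : substM nuMat (Spoly 3) = Spoly 3 := by
  rw [substM_nu]
  simp (config := { decide := true }) only [Spoly, Fin.sum_univ_four, if_true, if_false,
    map_sub, map_add, map_mul, map_pow, map_ofNat, aeval_X, nvec, Matrix.cons_val_zero,
    Matrix.cons_val_one, Matrix.head_cons, Matrix.cons_val_two, Matrix.tail_cons,
    Matrix.cons_val_three, map_zero, map_neg]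
  ring

lemma tauMat_sq : tauMat * tauMat = 1 := by
  ext i j
  fin_cases i <;> fin_cases j <;>
    simp [tauMat, Matrix.mul_apply, Fin.sum_univ_four, Matrix.one_apply, Matrix.vecHead, Matrix.vecTail] <;> norm_num

lemma tauMat_mem : tauMat ∈ TW :=
  TW.gen tauMat_sq tauMat_sq (Or.inr (Or.inr rfl))

lemma nuMat_mem : nuMat ∈ TW := by
  have : nuMat = Matrix.diagonal ![1, 1, 1, -1] := rfl
  rw [this]
  refine diag_mem _ ?_
  intro i
  fin_cases i
  · exact Or.inl rfl
  · exact Or.inl rfl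
  · exact Or.inl rfl
  · exact Or.inr rfl


/-! ### Diagonal substitutions and even exponents -/

lemma substM_diagonal (d : Fin 4 → ℂ) :
    substM (Matrix.diagonal d) = aeval (fun i => C (d i) * X i) := by
  unfold substM
  congr 1
  funext i
  rw [Finset.sum_eq_single i]
  · rw [Matrix.diagonal_apply_eq]
  · intro b _ hb
    rw [Matrix.diagonal_apply_ne' _ hb, map_zero, zero_mul]
  · simp

lemma coeff_aeval_scale (d : Fin 4 → ℂ) (f : TT) (m : Fin 4 →₀ ℕ) :
    coeff m (aeval (fun i => C (d i) * X i) f) = (∏ i, d i ^ m i) * coeff m f := by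
  induction f using MvPolynomial.induction_on' with
  | monomial n c =>
    rw [aeval_monomial, Finsupp.prod]
    have h1 : (∏ i ∈ n.support, (C (d i) * X i) ^ n i)
        = C (∏ i ∈ n.support, d i ^ n i) * ∏ i ∈ n.support, (X i : TT) ^ n i := by
      rw [map_prod, ← Finset.prod_mul_distrib]
      refine Finset.prod_congr rfl fun i _ => ?_
      rw [mul_pow, map_pow]
    rw [h1, algebraMap_eq, ← mul_assoc, ← C_mul]
    have h2 : (monomial n (c * ∏ i ∈ n.support, d i ^ n i) : TT)
        = C (c * ∏ i ∈ n.support, d i ^ n i) * ∏ i ∈ n.support, (X i : TT) ^ n i := by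
      rw [monomial_eq, Finsupp.prod]
    rw [← h2, coeff_monomial, coeff_monomial]
    split_ifs with h
    · subst h
      rw [mul_comm c]
      congr 1
      exact Finset.prod_subset (n.support.subset_univ) fun i _ hi => by
        rw [Finsupp.notMem_support_iff.mp hi, pow_zero]
    · rw [mul_zero]
  | add p q hp hq => rw [map_add, coeff_add, coeff_add, hp, hq, mul_add]

lemma even_exponents (f : TT)
    (hinv : ∀ i : Fin 4,
      substM (Matrix.diagonal (fun j => if j = i then (-1:ℂ) else 1)) f = f) :
    ∀ m ∈ f.support, ∀ i, Even (m i) := by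
  intro m hm i
  by_contra hodd
  have h := congrArg (coeff m) (hinv i)
  rw [substM_diagonal, coeff_aeval_scale] at h
  have hprod : (∏ j, (if j = i then (-1:ℂ) else 1) ^ m j) = (-1) ^ m i := by
    rw [Finset.prod_eq_single i]
    · rw [if_pos rfl]
    · intro b _ hb
      rw [if_neg hb, one_pow]
    · simp
  rw [hprod, Odd.neg_one_pow (Nat.not_even_iff_odd.mp hodd), neg_one_mul] at h
  exact mem_support_iff.mp hm (by linear_combination (-(1:ℂ)/2) * h)

lemma exists_expand_two (f : TT) (hev : ∀ m ∈ f.support, ∀ i, Even (m i)) :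
    ∃ q : TT, expand 2 q = f := by
  refine ⟨∑ m ∈ f.support, monomial (m.mapRange (fun n => n / 2) (by norm_num)) (coeff m f), ?_⟩
  rw [map_sum]
  rw [Finset.sum_congr rfl fun m hm => ?_, support_sum_monomial_coeff]
  set m2 : Fin 4 →₀ ℕ := m.mapRange (fun n => n / 2) (by norm_num) with hm2
  have hval : ∀ i, m2 i = m i / 2 := fun i => rfl
  have hsupp : m2.support = m.support := by
    ext i
    simp only [Finsupp.mem_support_iff, hval]
    obtain ⟨k, hk⟩ := hev m hm i
    rw [hk]
    omega
  rw [expand_monomial, show (2 • m2 : Fin 4 →₀ ℕ) = m from ?_]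
  ext i
  obtain ⟨k, hk⟩ := hev m hm i
  rw [Finsupp.smul_apply, hval, hk, smul_eq_mul]
  omega

/-! ### Permutation substitutions -/

lemma substM_perm (s : Equiv.Perm (Fin 4)) (f : TT) :
    substM (permM s) f = rename ⇑s⁻¹ f :=
  MvPolynomial.funext fun z => by
    rw [eval_substM, permM_mulVec, eval_rename]
    rfl

/-! ### Injectivity of `expand 2` -/

lemma eval_expand_two (z : Fin 4 → ℂ) (r : TT) :
    eval z (expand 2 r) = eval (fun i => z i ^ 2) r := by
  show eval z (eval₂ C (fun i => X i ^ 2) r) = _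
  rw [eval_eval₂]
  have h1 : ((eval z).comp (C : ℂ →+* TT)) = RingHom.id ℂ := by
    ext c; simp
  rw [h1]
  have h2 : (fun s => eval z ((X s : TT) ^ 2)) = fun i => z i ^ 2 := by
    funext i; simp
  rw [h2, eval₂_id]

lemma expand_two_injective (p q : TT) (h : expand 2 p = expand 2 q) : p = q := by
  apply MvPolynomial.funext
  intro w
  have hw : ∀ i : Fin 4, ∃ z : ℂ, z ^ 2 = w i :=
    fun i => IsAlgClosed.exists_pow_nat_eq (w i) (by norm_num)
  choose z hz using hw
  have hzw : (fun i => z i ^ 2) = w := funext hz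
  have hp := eval_expand_two z p
  have hq := eval_expand_two z q
  rw [hzw] at hp hq
  rw [← hp, ← hq, h]

/-! ### Explicit elementary symmetric polynomials -/

lemma esymm4_1 : esymm (Fin 4) ℂ 1 = X 0 + X 1 + X 2 + X 3 := by
  rw [esymm_one, Fin.sum_univ_four]

lemma esymm4_2 : esymm (Fin 4) ℂ 2
    = X 0*X 1 + X 0*X 2 + X 0*X 3 + X 1*X 2 + X 1*X 3 + X 2*X 3 := by
  rw [esymm, show (Finset.univ.powersetCard 2 : Finset (Finset (Fin 4)))
    = {{0,1},{0,2},{0,3},{1,2},{1,3},{2,3}} from by decide]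
  simp (config := { decide := true }) only [Finset.sum_insert, Finset.prod_insert,
    Finset.sum_singleton, Finset.prod_singleton, Finset.mem_insert, Finset.mem_singleton]
  ring

lemma esymm4_3 : esymm (Fin 4) ℂ 3
    = X 0*X 1*X 2 + X 0*X 1*X 3 + X 0*X 2*X 3 + X 1*X 2*X 3 := by
  rw [esymm, show (Finset.univ.powersetCard 3 : Finset (Finset (Fin 4)))
    = {{0,1,2},{0,1,3},{0,2,3},{1,2,3}} from by decide]
  simp (config := { decide := true }) only [Finset.sum_insert, Finset.prod_insert,
    Finset.sum_singleton, Finset.prod_singleton, Finset.mem_insert, Finset.mem_singleton]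
  ring

lemma esymm4_4 : esymm (Fin 4) ℂ 4 = X 0*X 1*X 2*X 3 := by
  rw [esymm, show (Finset.univ.powersetCard 4 : Finset (Finset (Fin 4)))
    = {{0,1,2,3}} from by decide]
  simp (config := { decide := true }) only [Finset.sum_singleton, Finset.prod_insert,
    Finset.prod_singleton, Finset.mem_insert, Finset.mem_singleton]
  ring

set_option maxHeartbeats 1000000 in
lemma hq1 : expand 2 (esymm (Fin 4) ℂ 1) = Pp 1 := by
  rw [esymm4_1]
  simp only [map_add, expand_X, Pp, Fin.sum_univ_four]

set_option maxHeartbeats 1000000 in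
lemma hq2 : (8 : TT) * expand 2 (esymm (Fin 4) ℂ 2) = 2 * (Pp 1)^2 - zA0 := by
  rw [esymm4_2]
  simp only [map_add, map_mul, expand_X, Pp, zA0, Fin.sum_univ_four]
  ring

set_option maxHeartbeats 1000000 in
lemma hq3 : (144 : TT) * expand 2 (esymm (Fin 4) ℂ 3)
    = 18 * (Pp 1)^3 - 3 * Pp 1 * zA0 - 2 * Spoly 3 := by
  rw [esymm4_3, hS3]
  simp only [map_add, map_mul, expand_X, Pp, zA0, Fin.sum_univ_four]
  ring

set_option maxHeartbeats 1000000 in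
lemma hq4 : (2304 : TT) * expand 2 (esymm (Fin 4) ℂ 4) = (2 * zA1 + zA0)^2 := by
  rw [esymm4_4]
  simp only [map_mul, expand_X, Pp, zA0, zA1, Fin.sum_univ_four]
  ring

/-! ### Membership helper -/

lemma mem_of_C_mul_eq {S : Subalgebra ℂ TT} {x : TT} (y : TT) {c : ℂ} (hc : c ≠ 0)
    (h : C c * x = y) (hy : y ∈ S) : x ∈ S := by
  have hx : x = c⁻¹ • y := by
    rw [← h, smul_eq_C_mul, ← mul_assoc, ← C_mul, inv_mul_cancel₀ hc, C_1, one_mul]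
  rw [hx]
  exact S.smul_mem hy _


/-! ### Elementary symmetric polynomials in three variables over any ring -/

lemma esymm3_1 (R : Type*) [CommSemiring R] : esymm (Fin 3) R 1 = X 0 + X 1 + X 2 := by
  rw [esymm_one, Fin.sum_univ_three]

lemma esymm3_2 (R : Type*) [CommSemiring R] :
    esymm (Fin 3) R 2 = X 0 * X 1 + X 0 * X 2 + X 1 * X 2 := by
  rw [esymm, show (Finset.univ.powersetCard 2 : Finset (Finset (Fin 3)))
    = {{0,1},{0,2},{1,2}} from by decide]
  simp (config := { decide := true }) only [Finset.sum_insert, Finset.prod_insert,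
    Finset.sum_singleton, Finset.prod_singleton, Finset.mem_insert, Finset.mem_singleton]
  ring

lemma esymm3_3 (R : Type*) [CommSemiring R] : esymm (Fin 3) R 3 = X 0 * (X 1 * X 2) := by
  rw [esymm, show (Finset.univ.powersetCard 3 : Finset (Finset (Fin 3)))
    = {{0,1,2}} from by decide]
  simp (config := { decide := true }) only [Finset.sum_singleton, Finset.prod_insert,
    Finset.prod_singleton, Finset.mem_insert, Finset.mem_singleton]

/-! ### The S₃-action by permuting `a₀, a₁, a₂` -/

def E5 : Fin 3 ⊕ Fin 2 ≃ Fin 5 := finSumFinEquiv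

def extE (π : Equiv.Perm (Fin 3)) : Equiv.Perm (Fin 5) :=
  E5.permCongr (Equiv.sumCongr π (Equiv.refl (Fin 2)))

lemma extE_mul (π₁ π₂ : Equiv.Perm (Fin 3)) : extE (π₁ * π₂) = extE π₁ * extE π₂ := by
  ext x
  simp only [extE, Equiv.permCongr_apply, Equiv.Perm.mul_apply, Equiv.symm_apply_apply]
  rcases h : E5.symm x with i | j <;>
    simp [h, Equiv.sumCongr_apply, Equiv.Perm.mul_apply]

lemma extE_one : extE 1 = 1 := by
  ext x
  simp only [extE, Equiv.permCongr_apply, Equiv.Perm.one_apply]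
  rcases h : E5.symm x with i | j <;>
    simp [h, Equiv.sumCongr_apply] <;> rw [← h, Equiv.apply_symm_apply]

def Realizes (π : Equiv.Perm (Fin 3)) : Prop :=
  ∃ M ∈ TW, ∀ i, substM M (gfun i) = gfun (extE π i)

lemma realizes_one : Realizes 1 :=
  ⟨1, TW.one, fun i => by rw [substM_one, extE_one, Equiv.Perm.one_apply]⟩

lemma realizes_mul {π₁ π₂ : Equiv.Perm (Fin 3)} (h₁ : Realizes π₁) (h₂ : Realizes π₂) :
    Realizes (π₂ * π₁) := by
  obtain ⟨M₁, hM₁, hg₁⟩ := h₁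
  obtain ⟨M₂, hM₂, hg₂⟩ := h₂
  refine ⟨M₁ * M₂, TW.mul hM₁ hM₂, fun i => ?_⟩
  rw [substM_mul, hg₁, hg₂, extE_mul, Equiv.Perm.mul_apply]

lemma realizes_tau : Realizes (Equiv.swap 0 1) := by
  refine ⟨tauMat, tauMat_mem, fun i => ?_⟩
  fin_cases i
  · show substM tauMat (gfun 0) = gfun (extE (Equiv.swap 0 1) 0)
    rw [show extE (Equiv.swap 0 1) 0 = 1 from by decide]
    exact tau_a0
  · show substM tauMat (gfun 1) = gfun (extE (Equiv.swap 0 1) 1)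
    rw [show extE (Equiv.swap 0 1) 1 = 0 from by decide]
    exact tau_a1
  · show substM tauMat (gfun 2) = gfun (extE (Equiv.swap 0 1) 2)
    rw [show extE (Equiv.swap 0 1) 2 = 2 from by decide]
    exact tau_a2
  · show substM tauMat (gfun 3) = gfun (extE (Equiv.swap 0 1) 3)
    rw [show extE (Equiv.swap 0 1) 3 = 3 from by decide]
    exact tau_p1
  · show substM tauMat (gfun 4) = gfun (extE (Equiv.swap 0 1) 4)
    rw [show extE (Equiv.swap 0 1) 4 = 4 from by decide]
    exact tau_S3

lemma realizes_nu : Realizes (Equiv.swap 1 2) := by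
  refine ⟨nuMat, nuMat_mem, fun i => ?_⟩
  fin_cases i
  · show substM nuMat (gfun 0) = gfun (extE (Equiv.swap 1 2) 0)
    rw [show extE (Equiv.swap 1 2) 0 = 0 from by decide]
    exact nu_a0
  · show substM nuMat (gfun 1) = gfun (extE (Equiv.swap 1 2) 1)
    rw [show extE (Equiv.swap 1 2) 1 = 2 from by decide]
    exact nu_a1
  · show substM nuMat (gfun 2) = gfun (extE (Equiv.swap 1 2) 2)
    rw [show extE (Equiv.swap 1 2) 2 = 1 from by decide]
    exact nu_a2
  · show substM nuMat (gfun 3) = gfun (extE (Equiv.swap 1 2) 3)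
    rw [show extE (Equiv.swap 1 2) 3 = 3 from by decide]
    exact nu_p1
  · show substM nuMat (gfun 4) = gfun (extE (Equiv.swap 1 2) 4)
    rw [show extE (Equiv.swap 1 2) 4 = 4 from by decide]
    exact nu_S3

lemma realizes_all : ∀ π : Equiv.Perm (Fin 3), Realizes π := by
  have hswap02 : Realizes (Equiv.swap 0 2) := by
    have h := realizes_mul (realizes_mul realizes_tau realizes_nu) realizes_tau
    have heq : Equiv.swap (0:Fin 3) 2 = Equiv.swap 0 1 * (Equiv.swap 1 2 * Equiv.swap 0 1) := by
      decide
    rw [heq]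
    exact h
  have hswap : ∀ x y : Fin 3, x ≠ y → Realizes (Equiv.swap x y) := by
    intro x y hxy
    fin_cases x <;> fin_cases y
    · exact absurd rfl hxy
    · exact realizes_tau
    · exact hswap02
    · rw [Equiv.swap_comm]; exact realizes_tau
    · exact absurd rfl hxy
    · exact realizes_nu
    · rw [Equiv.swap_comm]; exact hswap02
    · rw [Equiv.swap_comm]; exact realizes_nu
    · exact absurd rfl hxy
  intro π
  refine Equiv.Perm.swap_induction_on π realizes_one ?_
  intro g x y hxy hg
  exact realizes_mul hg (hswap x y hxy)

/-! ### The two algebra equivalences -/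

abbrev RR : Type := MvPolynomial (Fin 2) ℂ

def A1e : MvPolynomial (Fin 5) ℂ ≃ₐ[ℂ] MvPolynomial (Fin 3 ⊕ Fin 2) ℂ :=
  renameEquiv ℂ E5.symm

def A2e : MvPolynomial (Fin 3 ⊕ Fin 2) ℂ ≃ₐ[ℂ] MvPolynomial (Fin 3) RR :=
  sumAlgEquiv ℂ (Fin 3) (Fin 2)

def lam : MvPolynomial (Fin 3) RR →ₐ[ℂ] TT :=
  ((aeval gfun).comp A1e.symm.toAlgHom).comp A2e.symm.toAlgHom

lemma lam_comp (h5 : MvPolynomial (Fin 5) ℂ) : lam (A2e (A1e h5)) = aeval gfun h5 := by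
  simp [lam]

lemma A2_rename (π : Equiv.Perm (Fin 3)) (h : MvPolynomial (Fin 3 ⊕ Fin 2) ℂ) :
    A2e (rename (Sum.map ⇑π id) h) = rename ⇑π (A2e h) := by
  have key : (A2e.toAlgHom.toRingHom.comp (rename (Sum.map ⇑π id)).toRingHom
      : MvPolynomial (Fin 3 ⊕ Fin 2) ℂ →+* MvPolynomial (Fin 3) RR)
      = (rename ⇑π).toRingHom.comp A2e.toAlgHom.toRingHom := by
    apply MvPolynomial.ringHom_ext
    · intro c
      simp [A2e, sumAlgEquiv_C_inl, sumToIter_C]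
    · rintro (i | j) <;>
        simp [A2e, sumAlgEquiv_X_inl, sumAlgEquiv_X_inr, sumToIter_Xl, sumToIter_Xr, Sum.map]
  exact RingHom.congr_fun key h

lemma A1_rename (π : Equiv.Perm (Fin 3)) (H : MvPolynomial (Fin 5) ℂ) :
    A1e (rename ⇑(extE π) H) = rename (Sum.map ⇑π id) (A1e H) := by
  simp only [A1e, renameEquiv_apply, rename_rename]
  have hfun : ⇑E5.symm ∘ ⇑(extE π) = Sum.map ⇑π id ∘ ⇑E5.symm := by
    funext y
    simp [extE, Equiv.permCongr_apply, Equiv.sumCongr_apply]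
  rw [hfun]

def wvec : Fin 2 → TT := ![Pp 1, Spoly 3]

lemma lam_CX (j : Fin 2) : lam (C (X j)) = wvec j := by
  fin_cases j
  · show lam (C (X 0)) = wvec 0
    simp [lam, A1e, A2e, iterToSum_C_X, renameEquiv_symm,
      show E5 (Sum.inr (0 : Fin 2)) = (3 : Fin 5) from by decide]
    rfl
  · show lam (C (X 1)) = wvec 1
    simp [lam, A1e, A2e, iterToSum_C_X, renameEquiv_symm,
      show E5 (Sum.inr (1 : Fin 2)) = (4 : Fin 5) from by decide]
    rfl

lemma lam_C (r : RR) : lam (C r) = aeval wvec r := by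
  induction r using MvPolynomial.induction_on with
  | C c =>
    simp [lam, A1e, A2e, algebraMap_eq]
  | add p q hp hq =>
    rw [map_add, map_add, hp, hq, map_add]
  | mul_X p j hp =>
    rw [map_mul, map_mul, hp, map_mul, aeval_X, lam_CX]

lemma lam_X (i : Fin 3) : lam (X i) = gfun (E5 (Sum.inl i)) := by
  simp only [lam, AlgHom.coe_comp, AlgEquiv.toAlgHom_eq_coe, AlgHom.coe_coe,
    Function.comp_apply, A1e, A2e, sumAlgEquiv_symm_X, iterToSum_X,
    renameEquiv_symm, Equiv.symm_symm, renameEquiv_apply, rename_X, aeval_X]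
  simp [sumAlgEquiv_symm_X]

lemma lam_X0 : lam (X 0) = zA0 := by
  rw [lam_X, show E5 (Sum.inl (0 : Fin 3)) = (0 : Fin 5) from by decide]
  rfl

lemma lam_X1 : lam (X 1) = zA1 := by
  rw [lam_X, show E5 (Sum.inl (1 : Fin 3)) = (1 : Fin 5) from by decide]
  rfl

lemma lam_X2 : lam (X 2) = zA2 := by
  rw [lam_X, show E5 (Sum.inl (2 : Fin 3)) = (2 : Fin 5) from by decide]
  rfl

/-! ### Memberships in the target algebra -/

def AA : Subalgebra ℂ TT := Algebra.adjoin ℂ {Fpoly 1, Fpoly 3, Fpoly 4, Fpoly 6}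

lemma ofnat_mem (S : Subalgebra ℂ TT) (n : ℕ) [n.AtLeastTwo] :
    (OfNat.ofNat n : TT) ∈ S := by
  rw [← map_ofNat (algebraMap ℂ TT) n]
  exact S.algebraMap_mem _

lemma Spoly_mem {k : ℕ} (h : Fpoly k ∈ AA) : Spoly k ∈ AA := by
  have heq : Spoly k = (6:ℂ) • Fpoly k := by
    rw [Fpoly_eq_Spoly, smul_eq_C_mul, ← mul_assoc, ← C_mul]
    norm_num
  rw [heq]
  exact AA.smul_mem h _

lemma S1_mem : Spoly 1 ∈ AA := Spoly_mem (Algebra.subset_adjoin (by simp))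
lemma S3_mem : Spoly 3 ∈ AA := Spoly_mem (Algebra.subset_adjoin (by simp))
lemma S4_mem : Spoly 4 ∈ AA := Spoly_mem (Algebra.subset_adjoin (by simp))
lemma S6_mem : Spoly 6 ∈ AA := Spoly_mem (Algebra.subset_adjoin (by simp))

lemma p1_mem : Pp 1 ∈ AA := by
  refine mem_of_C_mul_eq (Spoly 1) (c := 6) (by norm_num) ?_ S1_mem
  rw [map_ofNat]
  exact hS1.symm

lemma lam_es1_mem : zA0 + zA1 + zA2 ∈ AA := by
  rw [ids1]; exact AA.zero_mem

lemma es2_mem : zA0 * zA1 + zA0 * zA2 + zA1 * zA2 ∈ AA := by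
  refine mem_of_C_mul_eq (-(288 * Spoly 4) + 208 * Spoly 1 * Spoly 3 - 5 * (Spoly 1) ^ 4)
    (c := 240) (by norm_num) ?_ ?_
  · rw [map_ofNat]; exact ids2
  · refine AA.sub_mem (AA.add_mem (AA.neg_mem (AA.mul_mem (ofnat_mem AA 288) S4_mem))
      (AA.mul_mem (AA.mul_mem (ofnat_mem AA 208) S1_mem) S3_mem))
      (AA.mul_mem (ofnat_mem AA 5) (AA.pow_mem S1_mem 4))

lemma es3_mem : zA0 * (zA1 * zA2) ∈ AA := by
  refine mem_of_C_mul_eq (-(41472 * Spoly 6) + 17568 * (Spoly 3) ^ 2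
      + 15696 * (Spoly 1) ^ 2 * Spoly 4 - 6776 * (Spoly 1) ^ 3 * Spoly 3 + 109 * (Spoly 1) ^ 6)
    (c := 38880) (by norm_num) ?_ ?_
  · rw [map_ofNat]
    rw [show (38880 : TT) * (zA0 * (zA1 * zA2)) = 38880 * (zA0 * zA1 * zA2) from by ring, ids3]
  · refine AA.add_mem (AA.sub_mem (AA.add_mem (AA.add_mem
      (AA.neg_mem (AA.mul_mem (ofnat_mem AA 41472) S6_mem))
      (AA.mul_mem (ofnat_mem AA 17568) (AA.pow_mem S3_mem 2)))
      (AA.mul_mem (AA.mul_mem (ofnat_mem AA 15696) (AA.pow_mem S1_mem 2)) S4_mem))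
      (AA.mul_mem (AA.mul_mem (ofnat_mem AA 6776) (AA.pow_mem S1_mem 3)) S3_mem))
      (AA.mul_mem (ofnat_mem AA 109) (AA.pow_mem S1_mem 6))

end

end F4InvProof

set_option maxHeartbeats 1000000 in
/-- Every polynomial on `ℂ⁴` invariant under `W̃` is a polynomial in `F₁, F₃, F₄, F₆`. -/
theorem symmetric_invariants_generated
    (f : MvPolynomial (Fin 4) ℂ)
    (hf : ∀ g ∈ tildeW, InvUnder (↑g : Matrix (Fin 4) (Fin 4) ℂ) f) :
    f ∈ Algebra.adjoin ℂ ({Fpoly 1, Fpoly 3, Fpoly 4, Fpoly 6} : Set (MvPolynomial (Fin 4) ℂ)) := by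
  classical
  open F4InvProof in
  show f ∈ AA
  have hM : ∀ M ∈ TW, substM M f = f := by
    rintro M ⟨u, hu, rfl⟩
    exact substM_eq_of_inv (hf u hu)
  have hev : ∀ m ∈ f.support, ∀ i, Even (m i) := by
    refine even_exponents f fun i => ?_
    refine hM _ (diag_mem _ fun j => ?_)
    by_cases h : j = i
    · rw [if_pos h]; exact Or.inr rfl
    · rw [if_neg h]; exact Or.inl rfl
  obtain ⟨q, hqf⟩ := exists_expand_two f hev
  have hren : ∀ s : Equiv.Perm (Fin 4), rename ⇑s f = f := by
    intro s
    have h := hM (permM s⁻¹) (permM_mem s⁻¹)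
    rwa [substM_perm, inv_inv] at h
  have hqsym : q.IsSymmetric := by
    intro s
    apply expand_two_injective
    rw [← rename_expand, hqf, hren]
  obtain ⟨K, hK⟩ := esymmAlgHom_surjective (σ := Fin 4) (R := ℂ) (n := 4)
    (by simp) ⟨q, (mem_symmetricSubalgebra q).mpr hqsym⟩
  have hq : q = aeval (fun i : Fin 4 => esymm (Fin 4) ℂ ((i : ℕ) + 1)) K := by
    have h := esymmAlgHom_apply (σ := Fin 4) (R := ℂ) (n := 4) K
    rw [← h, hK]
  have hfq : f = aeval (fun i : Fin 4 => expand 2 (esymm (Fin 4) ℂ ((i : ℕ) + 1))) K := by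
    rw [← hqf, hq, comp_aeval_apply]
  set GG := Algebra.adjoin ℂ (Set.range gfun) with hGG
  have hg0 : zA0 ∈ GG := Algebra.subset_adjoin ⟨0, rfl⟩
  have hg1 : zA1 ∈ GG := Algebra.subset_adjoin ⟨1, rfl⟩
  have hg3 : Pp 1 ∈ GG := Algebra.subset_adjoin ⟨3, rfl⟩
  have hg4 : Spoly 3 ∈ GG := Algebra.subset_adjoin ⟨4, rfl⟩
  have hqmem : ∀ i : Fin 4, expand 2 (esymm (Fin 4) ℂ ((i : ℕ) + 1)) ∈ GG := by
    intro i
    fin_cases i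
    · show expand 2 (esymm (Fin 4) ℂ 1) ∈ GG
      rw [hq1]; exact hg3
    · show expand 2 (esymm (Fin 4) ℂ 2) ∈ GG
      refine mem_of_C_mul_eq (2 * (Pp 1)^2 - zA0) (c := 8) (by norm_num) ?_ ?_
      · rw [map_ofNat]; exact hq2
      · exact GG.sub_mem (GG.mul_mem (ofnat_mem GG 2) (GG.pow_mem hg3 2)) hg0
    · show expand 2 (esymm (Fin 4) ℂ 3) ∈ GG
      refine mem_of_C_mul_eq (18 * (Pp 1)^3 - 3 * Pp 1 * zA0 - 2 * Spoly 3) (c := 144)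
        (by norm_num) ?_ ?_
      · rw [map_ofNat]; exact hq3
      · exact GG.sub_mem (GG.sub_mem (GG.mul_mem (ofnat_mem GG 18) (GG.pow_mem hg3 3))
          (GG.mul_mem (GG.mul_mem (ofnat_mem GG 3) hg3) hg0))
          (GG.mul_mem (ofnat_mem GG 2) hg4)
    · show expand 2 (esymm (Fin 4) ℂ 4) ∈ GG
      refine mem_of_C_mul_eq ((2 * zA1 + zA0)^2) (c := 2304) (by norm_num) ?_ ?_
      · rw [map_ofNat]; exact hq4
      · exact GG.pow_mem (GG.add_mem (GG.mul_mem (ofnat_mem GG 2) hg1) hg0) 2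
  have hfGG : f ∈ GG := by
    have h1 : f ∈ Algebra.adjoin ℂ
        (Set.range fun i : Fin 4 => expand 2 (esymm (Fin 4) ℂ ((i : ℕ) + 1))) := by
      rw [Algebra.adjoin_range_eq_range_aeval]
      exact ⟨K, hfq.symm⟩
    refine Algebra.adjoin_le ?_ h1
    rintro x ⟨i, rfl⟩
    exact hqmem i
  obtain ⟨H, hH⟩ : ∃ H, aeval gfun H = f := by
    rw [hGG, Algebra.adjoin_range_eq_range_aeval] at hfGG
    exact hfGG
  have hπ : ∀ π : Equiv.Perm (Fin 3), aeval gfun (rename ⇑(extE π) H) = f := by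
    intro π
    obtain ⟨M, hMTW, hgv⟩ := realizes_all π
    have h1 : substM M (aeval gfun H) = aeval gfun (rename ⇑(extE π) H) := by
      rw [aeval_rename, comp_aeval_apply]
      have hfun : (fun i => substM M (gfun i)) = gfun ∘ ⇑(extE π) := by
        funext i; rw [Function.comp_apply]; exact hgv i
      rw [hfun]
    rw [← h1, hH]
    exact hM M hMTW
  set Ht : MvPolynomial (Fin 5) ℂ :=
    C (6⁻¹ : ℂ) * ∑ π : Equiv.Perm (Fin 3), rename ⇑(extE π) H with hHt_def
  have hHt : aeval gfun Ht = f := by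
    rw [hHt_def, map_mul, map_sum]
    rw [Finset.sum_congr rfl fun π _ => hπ π]
    rw [Finset.sum_const, Finset.card_univ, Fintype.card_perm]
    rw [show (Fintype.card (Fin 3)).factorial = 6 from rfl]
    rw [aeval_C, algebraMap_eq, nsmul_eq_mul]
    rw [show ((6 : ℕ) : TT) = C ((6 : ℕ) : ℂ) from (map_natCast (C : ℂ →+* TT) 6).symm]
    rw [← mul_assoc, ← C_mul]
    norm_num
  have hHtinv : ∀ π₀ : Equiv.Perm (Fin 3), rename ⇑(extE π₀) Ht = Ht := by
    intro π₀
    rw [hHt_def, map_mul, rename_C, map_sum]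
    congr 1
    have hterm : ∀ π : Equiv.Perm (Fin 3),
        rename ⇑(extE π₀) (rename ⇑(extE π) H) = rename ⇑(extE (π₀ * π)) H := by
      intro π
      rw [rename_rename, extE_mul]
      rfl
    calc (∑ π : Equiv.Perm (Fin 3), rename ⇑(extE π₀) (rename ⇑(extE π) H))
        = ∑ π : Equiv.Perm (Fin 3), rename ⇑(extE (π₀ * π)) H :=
          Finset.sum_congr rfl fun π _ => hterm π
      _ = ∑ π : Equiv.Perm (Fin 3), rename ⇑(extE π) H :=
          Fintype.sum_equiv (Equiv.mulLeft π₀) _ _ fun π => rfl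
  set P : MvPolynomial (Fin 3) RR := A2e (A1e Ht) with hP_def
  have hPsym : P.IsSymmetric := by
    intro π
    rw [hP_def, ← A2_rename, ← A1_rename, hHtinv]
  obtain ⟨K3, hK3⟩ := esymmAlgHom_surjective (σ := Fin 3) (R := RR) (n := 3)
    (by simp) ⟨P, (mem_symmetricSubalgebra P).mpr hPsym⟩
  have hP : P = aeval (fun i : Fin 3 => esymm (Fin 3) RR ((i : ℕ) + 1)) K3 := by
    have h := esymmAlgHom_apply (σ := Fin 3) (R := RR) (n := 3) K3
    rw [← h, hK3]
  have hPadj : P ∈ Algebra.adjoin RR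
      (Set.range fun i : Fin 3 => esymm (Fin 3) RR ((i : ℕ) + 1)) := by
    rw [Algebra.adjoin_range_eq_range_aeval]
    exact ⟨K3, hP.symm⟩
  have hlam : ∀ x ∈ Algebra.adjoin RR
      (Set.range fun i : Fin 3 => esymm (Fin 3) RR ((i : ℕ) + 1)), lam x ∈ AA := by
    intro x hx
    induction hx using Algebra.adjoin_induction with
    | mem x hx =>
      obtain ⟨i, rfl⟩ := hx
      fin_cases i
      · show lam (esymm (Fin 3) RR 1) ∈ AA
        rw [esymm3_1, map_add, map_add, lam_X0, lam_X1, lam_X2]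
        exact lam_es1_mem
      · show lam (esymm (Fin 3) RR 2) ∈ AA
        rw [esymm3_2, map_add, map_add, map_mul, map_mul, map_mul, lam_X0, lam_X1, lam_X2]
        exact es2_mem
      · show lam (esymm (Fin 3) RR 3) ∈ AA
        rw [esymm3_3, map_mul, map_mul, lam_X0, lam_X1, lam_X2]
        exact es3_mem
    | algebraMap r =>
      have h : lam (algebraMap RR (MvPolynomial (Fin 3) RR) r) = aeval wvec r := by
        rw [algebraMap_eq, lam_C]
      rw [h]
      have h2 : aeval wvec r ∈ Algebra.adjoin ℂ (Set.range wvec) := by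
        rw [Algebra.adjoin_range_eq_range_aeval]
        exact ⟨r, rfl⟩
      refine Algebra.adjoin_le ?_ h2
      rintro y ⟨j, rfl⟩
      fin_cases j
      · exact p1_mem
      · exact S3_mem
    | add x y hx hy hx' hy' =>
      rw [map_add]; exact AA.add_mem hx' hy'
    | mul x y hx hy hx' hy' =>
      rw [map_mul]; exact AA.mul_mem hx' hy'
  rw [← hHt, ← lam_comp Ht]
  exact hlam P hPadj
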